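/- Let q : [0,1] → ℝ be bounded, Lebesgue-measurable and nonnegative, let n ≥ 1 be a natural number and let τ ∈ (0,1]. Suppose S and E are continuous linear operators on L²([0,1]) such that for every f ∈ L²([0,1]): (Sf)(t) = f(t − τ/n) for almost every t ∈ [τ/n, 1] and (Sf)(t) = 0 for almost every t ∈ [0, τ/n), and (Ef)(t) = exp(−(τ/n)·q(t))·f(t) for almost every t ∈ [0,1]; and suppose W is a continuous linear operator on L²([0,1]) such that for every f: (Wf)(t) = exp(−∫_{t−τ}^{t} q(y) dy)·f(t−τ) for almost every t ∈ [τ,1] and (Wf)(t) = 0 for almost every t ∈ [0,τ). Then the operator norm of the difference equals the essential supremum of the scalar error: ‖W − (S∘E)^n‖ = ess sup_{t∈[τ,1]} | exp(−∫_{t−τ}^{t} q(y) dy) − exp(−(τ/n)·Σ_{k=0}^{n−1} q(t − τ + k·τ/n)) |. -/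

import Mathlib

open MeasureTheory Finset intervalIntegral

/-- Lebesgue measure restricted to `[0,1]`. -/
noncomputable def mu01 : Measure ℝ := volume.restrict (Set.Icc (0 : ℝ) 1)

lemma mu01_ae {Q : ℝ → Prop} (h : ∀ᵐ t ∂mu01, Q t) :
    ∀ᵐ t ∂(volume : Measure ℝ), t ∈ Set.Icc (0:ℝ) 1 → Q t :=
  (ae_restrict_iff' measurableSet_Icc).mp h

lemma mu01_ae' {Q : ℝ → Prop} (h : ∀ᵐ t ∂(volume : Measure ℝ), t ∈ Set.Icc (0:ℝ) 1 → Q t) :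
    ∀ᵐ t ∂mu01, Q t :=
  (ae_restrict_iff' measurableSet_Icc).mpr h

lemma ae_shift {P : ℝ → Prop} (c : ℝ) (h : ∀ᵐ t ∂(volume : Measure ℝ), P t) :
    ∀ᵐ t ∂(volume : Measure ℝ), P (t - c) :=
  (measurePreserving_sub_right volume c).quasiMeasurePreserving.ae h

lemma map_shift_restrict (τ : ℝ) :
    Measure.map (· + τ) ((volume : Measure ℝ).restrict (Set.Icc 0 (1 - τ)))
      = (volume : Measure ℝ).restrict (Set.Icc τ 1) := by
  have h := Measure.restrict_map (μ := (volume : Measure ℝ)) (f := (· + τ))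
    (measurable_add_const τ) (s := Set.Icc τ 1) measurableSet_Icc
  rw [map_add_right_eq_self] at h
  have hpre : ((fun x => x + τ) ⁻¹' Set.Icc τ 1) = Set.Icc 0 (1 - τ) := by
    ext x
    simp only [Set.mem_preimage, Set.mem_Icc]
    constructor <;> (rintro ⟨h1, h2⟩; constructor <;> linarith)
  rw [h, hpre]

lemma essSup_zero_real (f : ℝ → ℝ) : essSup f (0 : Measure ℝ) = 0 := by
  rw [essSup, ae_zero, Filter.limsup_eq]
  have : {a : ℝ | ∀ᶠ n in ⊥, f n ≤ a} = Set.univ := by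
    ext a; simp
  rw [this]
  exact Real.sInf_of_not_bddBelow (by simp [not_bddBelow_univ])


lemma opNorm_eq_essSup_abs (τ : ℝ) (hτ0 : 0 < τ) (hτ1 : τ < 1)
    (φ : ℝ → ℝ) (hφm : Measurable φ) (K : ℝ) (hφb : ∀ t, |φ t| ≤ K)
    (D : Lp ℝ 2 mu01 →L[ℝ] Lp ℝ 2 mu01)
    (hD : ∀ f : Lp ℝ 2 mu01,
      (D f : ℝ → ℝ) =ᵐ[mu01]
        (Set.Icc τ 1).indicator (fun t => φ t * (f : ℝ → ℝ) (t - τ))) :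
    ‖D‖ = essSup (fun t => |φ t|) (volume.restrict (Set.Icc τ 1)) := by
  set ν := (volume : Measure ℝ).restrict (Set.Icc τ 1) with hν
  have hν0 : ν ≠ 0 := by
    rw [hν, Ne, Measure.restrict_eq_zero, Real.volume_Icc, ENNReal.ofReal_eq_zero]
    intro h; linarith
  haveI hneb : (ae ν).NeBot := ae_neBot.mpr hν0
  set C := essSup (fun t => |φ t|) ν with hC
  have hbdd : Filter.IsBoundedUnder (· ≤ ·) (ae ν) (fun t => |φ t|) :=
    Filter.isBoundedUnder_of ⟨K, fun t => hφb t⟩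
  have hle : ∀ᵐ t ∂ν, |φ t| ≤ C := ae_le_essSup hbdd
  have hC0 : 0 ≤ C :=
    Filter.le_limsup_of_frequently_le
      ((Filter.Eventually.of_forall fun t => abs_nonneg (φ t)).frequently) hbdd
  have hsub : Set.Icc τ 1 ⊆ Set.Icc (0:ℝ) 1 := Set.Icc_subset_Icc (le_of_lt hτ0) le_rfl
  have hres : mu01.restrict (Set.Icc τ 1) = ν := by
    rw [mu01, Measure.restrict_restrict measurableSet_Icc, Set.inter_eq_left.mpr hsub]
  have key : ∀ f : Lp ℝ 2 mu01,
      eLpNorm ((D f : ℝ → ℝ)) 2 mu01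
        = eLpNorm (fun t => φ t * (f : ℝ → ℝ) (t - τ)) 2 ν := by
    intro f
    rw [eLpNorm_congr_ae (hD f), eLpNorm_indicator_eq_eLpNorm_restrict measurableSet_Icc,
      hres]
  have hshift : ∀ f : Lp ℝ 2 mu01,
      eLpNorm (fun t => (f : ℝ → ℝ) (t - τ)) 2 ν ≤ eLpNorm ((f : ℝ → ℝ)) 2 mu01 := by
    intro f
    have hg : AEStronglyMeasurable (fun t => (f : ℝ → ℝ) (t - τ))
        (Measure.map (· + τ) ((volume : Measure ℝ).restrict (Set.Icc 0 (1 - τ)))) :=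
      ((Lp.stronglyMeasurable f).comp_measurable
        (measurable_id.sub_const τ)).aestronglyMeasurable
    rw [hν, ← map_shift_restrict τ, eLpNorm_map_measure hg
      (measurable_add_const τ).aemeasurable]
    have hcomp : ((fun t => (f : ℝ → ℝ) (t - τ)) ∘ (· + τ)) = (f : ℝ → ℝ) := by
      funext s; simp
    rw [hcomp]
    exact eLpNorm_mono_measure _
      (Measure.restrict_mono (Set.Icc_subset_Icc le_rfl (by linarith)) le_rfl)
  refine le_antisymm (D.opNorm_le_bound hC0 fun f => ?_) ?_
  · have h2 : eLpNorm (fun t => φ t * (f : ℝ → ℝ) (t - τ)) 2 ν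
        ≤ ENNReal.ofReal C * eLpNorm (fun t => (f : ℝ → ℝ) (t - τ)) 2 ν := by
      have hb : ∀ᵐ t ∂ν, ‖φ t * (f : ℝ → ℝ) (t - τ)‖ ≤ ‖C * (f : ℝ → ℝ) (t - τ)‖ := by
        filter_upwards [hle] with t ht
        rw [norm_mul, norm_mul, Real.norm_eq_abs, Real.norm_eq_abs C, abs_of_nonneg hC0]
        exact mul_le_mul_of_nonneg_right ht (norm_nonneg _)
      calc eLpNorm (fun t => φ t * (f : ℝ → ℝ) (t - τ)) 2 ν
          ≤ eLpNorm (fun t => C * (f : ℝ → ℝ) (t - τ)) 2 ν := eLpNorm_mono_ae hb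
        _ = ‖C‖₊ * eLpNorm (fun t => (f : ℝ → ℝ) (t - τ)) 2 ν := by
            rw [show (fun t => C * (f : ℝ → ℝ) (t - τ))
                = C • (fun t => (f : ℝ → ℝ) (t - τ)) from rfl,
              eLpNorm_const_smul, enorm_eq_nnnorm]
        _ = ENNReal.ofReal C * eLpNorm (fun t => (f : ℝ → ℝ) (t - τ)) 2 ν := by
            rw [← enorm_eq_nnnorm, Real.enorm_eq_ofReal hC0]
    have h3 : eLpNorm ((D f : ℝ → ℝ)) 2 mu01
        ≤ ENNReal.ofReal C * eLpNorm ((f : ℝ → ℝ)) 2 mu01 := by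
      rw [key f]
      exact h2.trans (mul_le_mul_right (hshift f) _)
    rw [Lp.norm_def, Lp.norm_def]
    calc (eLpNorm ((D f : ℝ → ℝ)) 2 mu01).toReal
        ≤ (ENNReal.ofReal C * eLpNorm ((f : ℝ → ℝ)) 2 mu01).toReal :=
          ENNReal.toReal_mono
            (ENNReal.mul_ne_top ENNReal.ofReal_ne_top (Lp.eLpNorm_ne_top f)) h3
      _ = C * (eLpNorm ((f : ℝ → ℝ)) 2 mu01).toReal := by
          rw [ENNReal.toReal_mul, ENNReal.toReal_ofReal hC0]
  · refine le_of_forall_sub_le fun ε hε => ?_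
    rcases le_or_gt (C - ε) 0 with h0 | hpos
    · exact h0.trans (norm_nonneg D)
    set Aset := Set.Icc τ 1 ∩ {t | C - ε < |φ t|} with hA
    have hAm : MeasurableSet Aset :=
      measurableSet_Icc.inter (measurableSet_lt measurable_const hφm.abs)
    have hA0 : volume Aset ≠ 0 := by
      intro h0'
      have hν' : ν {t | C - ε < |φ t|} = 0 := by
        rw [hν, Measure.restrict_apply (measurableSet_lt measurable_const hφm.abs),
          Set.inter_comm]
        exact h0'
      have hae : ∀ᵐ t ∂ν, |φ t| ≤ C - ε := by
        rw [ae_iff]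
        simpa [not_le] using hν'
      have hcob : Filter.IsCoboundedUnder (· ≤ ·) (ae ν) (fun t => |φ t|) :=
        (Filter.isBoundedUnder_of ⟨0, fun t => abs_nonneg (φ t)⟩ :
          Filter.IsBoundedUnder (· ≥ ·) (ae ν) (fun t => |φ t|)).isCoboundedUnder_le
      have : C ≤ C - ε := Filter.limsup_le_of_le hcob hae
      linarith
    have hAfin : volume Aset ≠ ⊤ :=
      ((measure_mono Set.inter_subset_left).trans_lt measure_Icc_lt_top).ne
    set B := (· + τ) ⁻¹' Aset with hB
    have hBm : MeasurableSet B := hAm.preimage (measurable_add_const τ)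
    have hBsub : B ⊆ Set.Icc (0:ℝ) 1 := by
      intro s hs
      have h1 : s + τ ∈ Set.Icc τ 1 := (hs : s + τ ∈ Aset).1
      exact ⟨by linarith [h1.1], by linarith [h1.2]⟩
    have hvolB : volume B = volume Aset := measure_preimage_add_right volume τ Aset
    have hBmu : mu01 B = volume Aset := by
      rw [mu01, Measure.restrict_apply hBm, Set.inter_eq_left.mpr hBsub, hvolB]
    have hBfin : mu01 B ≠ ⊤ := by rw [hBmu]; exact hAfin
    set f : Lp ℝ 2 mu01 := indicatorConstLp 2 hBm hBfin (1:ℝ) with hf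
    have hfnorm : ‖f‖ = (volume Aset).toReal ^ (1/2 : ℝ) := by
      rw [hf, norm_indicatorConstLp (by norm_num) (by norm_num)]
      rw [show mu01.real B = (mu01 B).toReal from rfl, hBmu]
      norm_num
    have hfpos : 0 < ‖f‖ := by
      rw [hfnorm]
      exact Real.rpow_pos_of_pos (ENNReal.toReal_pos hA0 hAfin) _
    have hf_ae : ∀ᵐ t ∂(volume : Measure ℝ), t - τ ∈ Set.Icc (0:ℝ) 1 →
        (f : ℝ → ℝ) (t - τ) = B.indicator (fun _ => (1:ℝ)) (t - τ) :=
      ae_shift τ (mu01_ae (indicatorConstLp_coeFn (p := 2) (μ := mu01)))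
    have h3 : ∀ᵐ t ∂((volume : Measure ℝ).restrict Aset),
        ‖(C - ε : ℝ)‖ ≤ ‖φ t * (f : ℝ → ℝ) (t - τ)‖ := by
      filter_upwards [ae_restrict_mem hAm, ae_restrict_of_ae hf_ae] with t ht hft
      have ht1 : t ∈ Set.Icc τ 1 := ht.1
      have htB : t - τ ∈ B := by
        show t - τ + τ ∈ Aset
        rwa [sub_add_cancel]
      have hfv : (f : ℝ → ℝ) (t - τ) = 1 := by
        rw [hft ⟨by linarith [ht1.1], by linarith [ht1.2]⟩, Set.indicator_of_mem htB]
      rw [hfv, mul_one, Real.norm_eq_abs, Real.norm_eq_abs, abs_of_pos hpos]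
      exact le_of_lt ht.2
    have h4 : eLpNorm (fun _ => (C - ε : ℝ)) 2 ((volume : Measure ℝ).restrict Aset)
        ≤ eLpNorm ((D f : ℝ → ℝ)) 2 mu01 := by
      rw [key f]
      refine (eLpNorm_mono_ae h3).trans (eLpNorm_mono_measure _ ?_)
      exact Measure.restrict_mono Set.inter_subset_left le_rfl
    have h5 : eLpNorm (fun _ => (C - ε : ℝ)) 2 ((volume : Measure ℝ).restrict Aset)
        = ‖(C - ε : ℝ)‖₊ * (volume Aset) ^ (1/2 : ℝ) := by
      rw [eLpNorm_const _ (by norm_num) (by rw [Ne, Measure.restrict_eq_zero]; exact hA0)]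
      rw [Measure.restrict_apply_univ]
      norm_num
      rfl
    have h6 : (C - ε) * ‖f‖ ≤ ‖D f‖ := by
      have hmono := ENNReal.toReal_mono (Lp.eLpNorm_ne_top (D f)) (h5 ▸ h4)
      rw [ENNReal.toReal_mul, ← ENNReal.toReal_rpow] at hmono
      calc (C - ε) * ‖f‖
          = (↑‖(C - ε : ℝ)‖₊ : ENNReal).toReal * (volume Aset).toReal ^ (1/2 : ℝ) := by
            rw [hfnorm, ENNReal.coe_toReal, coe_nnnorm, Real.norm_eq_abs, abs_of_pos hpos]
        _ ≤ (eLpNorm ((D f : ℝ → ℝ)) 2 mu01).toReal := hmono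
        _ = ‖D f‖ := (Lp.norm_def _).symm
    have h7 : ‖D f‖ ≤ ‖D‖ * ‖f‖ := D.le_opNorm f
    have := h6.trans h7
    exact le_of_mul_le_mul_right (by linarith) hfpos

lemma pow_formula (q : ℝ → ℝ) (c : ℝ) (hc0 : 0 < c)
    (S E : Lp ℝ 2 mu01 →L[ℝ] Lp ℝ 2 mu01)
    (hS₁ : ∀ f : Lp ℝ 2 mu01,
      ∀ᵐ t ∂mu01, t ∈ Set.Icc c 1 → (S f : ℝ → ℝ) t = (f : ℝ → ℝ) (t - c))
    (hS₂ : ∀ f : Lp ℝ 2 mu01,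
      ∀ᵐ t ∂mu01, t ∈ Set.Ico 0 c → (S f : ℝ → ℝ) t = 0)
    (hE : ∀ f : Lp ℝ 2 mu01,
      ∀ᵐ t ∂mu01, t ∈ Set.Icc (0:ℝ) 1 →
        (E f : ℝ → ℝ) t = Real.exp (-c * q t) * (f : ℝ → ℝ) t)
    (m : ℕ) (f : Lp ℝ 2 mu01) :
    ∀ᵐ t ∂(volume : Measure ℝ), t ∈ Set.Icc (0:ℝ) 1 →
      (((S.comp E) ^ m) f : ℝ → ℝ) t
        = if (m : ℝ) * c ≤ t then
            Real.exp (-c * ∑ j ∈ Finset.range m, q (t - ((j : ℝ) + 1) * c))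
              * (f : ℝ → ℝ) (t - m * c)
          else 0 := by
  induction m with
  | zero =>
    have h0 : ((S.comp E) ^ 0) f = f := by simp
    refine Filter.Eventually.of_forall fun t ht => ?_
    rw [h0]
    simp [ht.1]
  | succ m ih =>
    set g := ((S.comp E) ^ m) f with hg
    have hpow : ((S.comp E) ^ (m + 1)) f = S (E g) := by
      rw [pow_succ', ContinuousLinearMap.mul_apply]; rfl
    have hEg' := ae_shift c (mu01_ae (hE g))
    have ih' := ae_shift c ih
    filter_upwards [mu01_ae (hS₁ (E g)), mu01_ae (hS₂ (E g)), hEg', ih'] with t h1 h2 h3 h4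
    intro ht
    rw [hpow]
    by_cases hct : c ≤ t
    · have htc : t - c ∈ Set.Icc (0:ℝ) 1 := ⟨by linarith, by linarith [ht.2]⟩
      rw [h1 ht ⟨hct, ht.2⟩, h3 htc htc, h4 htc]
      by_cases hmc : (m : ℝ) * c ≤ t - c
      · rw [if_pos hmc, if_pos (by push_cast; linarith)]
        rw [← mul_assoc, ← Real.exp_add]
        have harg : t - c - (m : ℝ) * c = t - ((m + 1 : ℕ) : ℝ) * c := by push_cast; ring
        have hsum : (∑ j ∈ Finset.range (m + 1), q (t - ((j : ℝ) + 1) * c))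
            = (∑ j ∈ Finset.range m, q (t - c - ((j : ℝ) + 1) * c)) + q (t - c) := by
          rw [Finset.sum_range_succ' (fun j => q (t - ((j : ℝ) + 1) * c)) m]
          congr 1
          · apply Finset.sum_congr rfl
            intro j _
            congr 1
            push_cast
            ring
          · congr 1; ring
        have h5 : -c * q (t - c)
              + -c * ∑ j ∈ Finset.range m, q (t - c - ((j : ℝ) + 1) * c)
            = -c * ∑ j ∈ Finset.range (m + 1), q (t - ((j : ℝ) + 1) * c) := by
          rw [hsum]; ring
        rw [h5, harg]
      · rw [if_neg hmc, if_neg (by push_cast; intro h; exact hmc (by linarith)), mul_zero]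
    · have hlt : t < c := lt_of_not_ge hct
      rw [h2 ht ⟨ht.1, hlt⟩, if_neg]
      push_cast
      intro h
      have hm0 : (0:ℝ) ≤ (m : ℝ) * c := mul_nonneg (Nat.cast_nonneg m) hc0.le
      linarith

/-- **Operator-norm Trotter error = scalar approximation error.**
Let `S` be the truncated right-shift by `τ/n`, `E` multiplication by `exp(−(τ/n)q(t))`,
and `W` the evolution semigroup `(Wf)(t) = exp(−∫_{t−τ}^t q) f(t−τ)` on `L²([0,1])`.
Then `‖W − (S∘E)^n‖` equals the essential supremum over `t ∈ [τ,1]` of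
`|exp(−∫_{t−τ}^t q) − exp(−(τ/n) Σ_{k<n} q(t−τ+kτ/n))|`. -/
theorem trotter_opNorm_eq_scalar_error (q : ℝ → ℝ) (hq_meas : Measurable q)
    (M : ℝ) (hq_bdd : ∀ t, |q t| ≤ M) (hq_nonneg : ∀ t, 0 ≤ q t)
    (n : ℕ) (hn : 1 ≤ n) (τ : ℝ) (hτ0 : 0 < τ) (hτ1 : τ ≤ 1)
    (S E W : Lp ℝ 2 mu01 →L[ℝ] Lp ℝ 2 mu01)
    (hS₁ : ∀ f : Lp ℝ 2 mu01,
      ∀ᵐ t ∂mu01, t ∈ Set.Icc (τ / n) 1 → (S f : ℝ → ℝ) t = (f : ℝ → ℝ) (t - τ / n))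
    (hS₂ : ∀ f : Lp ℝ 2 mu01,
      ∀ᵐ t ∂mu01, t ∈ Set.Ico 0 (τ / n) → (S f : ℝ → ℝ) t = 0)
    (hE : ∀ f : Lp ℝ 2 mu01,
      ∀ᵐ t ∂mu01, t ∈ Set.Icc (0 : ℝ) 1 →
        (E f : ℝ → ℝ) t = Real.exp (-(τ / n) * q t) * (f : ℝ → ℝ) t)
    (hW₁ : ∀ f : Lp ℝ 2 mu01,
      ∀ᵐ t ∂mu01, t ∈ Set.Icc τ 1 →
        (W f : ℝ → ℝ) t = Real.exp (-(∫ y in (t - τ)..t, q y)) * (f : ℝ → ℝ) (t - τ))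
    (hW₂ : ∀ f : Lp ℝ 2 mu01,
      ∀ᵐ t ∂mu01, t ∈ Set.Ico 0 τ → (W f : ℝ → ℝ) t = 0) :
    ‖W - (S.comp E) ^ n‖
      = essSup
          (fun t =>
            |Real.exp (-(∫ y in (t - τ)..t, q y))
              - Real.exp (-(τ / n) * ∑ k ∈ Finset.range n, q (t - τ + k * τ / n))|)
          (volume.restrict (Set.Icc τ 1)) := by
  have hn' : (0:ℝ) < n := by exact_mod_cast hn
  have hc0 : 0 < τ / n := div_pos hτ0 hn'
  have hnτ : (n : ℝ) * (τ / n) = τ := by field_simp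
  set φ : ℝ → ℝ := fun t =>
    Real.exp (-(∫ y in (t - τ)..t, q y))
      - Real.exp (-(τ / n) * ∑ k ∈ Finset.range n, q (t - τ + k * τ / n)) with hφ
  have hsum : ∀ t : ℝ, (∑ j ∈ Finset.range n, q (t - ((j:ℝ) + 1) * (τ / n)))
      = ∑ k ∈ Finset.range n, q (t - τ + ↑k * τ / n) := by
    intro t
    rw [← Finset.sum_range_reflect (fun k => q (t - τ + ↑k * τ / n)) n]
    apply Finset.sum_congr rfl
    intro j hj
    rw [Finset.mem_range] at hj
    congr 1
    have h1 : ((n - 1 - j : ℕ) : ℝ) = (n : ℝ) - 1 - (j : ℝ) := by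
      have h2 : n - 1 - j = n - (1 + j) := by omega
      rw [h2, Nat.cast_sub (by omega)]
      push_cast
      ring
    rw [h1]
    have hne : (n : ℝ) ≠ 0 := ne_of_gt hn'
    field_simp
    ring
  have hDf : ∀ f : Lp ℝ 2 mu01,
      (((W - (S.comp E) ^ n) f : Lp ℝ 2 mu01) : ℝ → ℝ) =ᵐ[mu01]
        (Set.Icc τ 1).indicator (fun t => φ t * (f : ℝ → ℝ) (t - τ)) := by
    intro f
    have hc : (((W - (S.comp E) ^ n) f : Lp ℝ 2 mu01) : ℝ → ℝ)
        =ᵐ[mu01] fun t => (W f : ℝ → ℝ) t - (((S.comp E) ^ n) f : ℝ → ℝ) t := by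
      rw [ContinuousLinearMap.sub_apply]
      exact Lp.coeFn_sub _ _
    have hmem : ∀ᵐ t ∂mu01, t ∈ Set.Icc (0:ℝ) 1 := ae_restrict_mem measurableSet_Icc
    have hP := mu01_ae' (pow_formula q (τ / n) hc0 S E hS₁ hS₂ hE n f)
    filter_upwards [hW₁ f, hW₂ f, hP, hc, hmem] with t h1 h2 h3 h4 h5
    rw [h4]
    by_cases hτt : τ ≤ t
    · have htau : t ∈ Set.Icc τ 1 := ⟨hτt, h5.2⟩
      rw [h1 htau, h3, if_pos (by rw [hnτ]; exact hτt), hnτ, hsum t,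
        Set.indicator_of_mem htau]
      simp only [hφ]
      ring
    · have hlt : t < τ := lt_of_not_ge hτt
      rw [h2 ⟨h5.1, hlt⟩, h3, if_neg (by rw [hnτ]; exact hτt),
        Set.indicator_of_notMem (fun hmem' => hτt hmem'.1), sub_zero]
  rcases lt_or_eq_of_le hτ1 with hτlt | hτeq
  · have hInt : ∀ a b : ℝ, IntervalIntegrable q volume a b := by
      intro a b
      rw [intervalIntegrable_iff]
      refine Measure.integrableOn_of_bounded (M := M) measure_Ioc_lt_top.ne
        hq_meas.aestronglyMeasurable ?_
      exact Filter.Eventually.of_forall fun y => (Real.norm_eq_abs (q y)) ▸ hq_bdd y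
    have hcont : Continuous fun t => ∫ y in (0:ℝ)..t, q y :=
      intervalIntegral.continuous_primitive hInt 0
    have hmeas1 : Measurable fun t => ∫ y in (t - τ)..t, q y := by
      have heq : (fun t => ∫ y in (t - τ)..t, q y)
          = fun t => (∫ y in (0:ℝ)..t, q y) - ∫ y in (0:ℝ)..(t - τ), q y := by
        funext t
        rw [intervalIntegral.integral_interval_sub_left (hInt 0 t) (hInt 0 (t - τ))]
      rw [heq]
      exact hcont.measurable.sub (hcont.measurable.comp (measurable_id.sub_const τ))
    have hφm : Measurable φ := by
      rw [hφ]
      refine (Real.measurable_exp.comp hmeas1.neg).sub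
        (Real.measurable_exp.comp ?_)
      exact (Finset.measurable_sum _ fun k _ =>
        hq_meas.comp ((measurable_id.sub_const τ).add_const _)).const_mul _
    have hφb : ∀ t, |φ t| ≤ 2 := by
      intro t
      have h1 : 0 ≤ ∫ y in (t - τ)..t, q y :=
        intervalIntegral.integral_nonneg_of_forall (by linarith) hq_nonneg
      have h2 : (0:ℝ) ≤ ∑ k ∈ Finset.range n, q (t - τ + ↑k * τ / n) :=
        Finset.sum_nonneg fun k _ => hq_nonneg _
      have e1 : Real.exp (-(∫ y in (t - τ)..t, q y)) ≤ 1 :=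
        Real.exp_le_one_iff.mpr (by linarith)
      have e2 : Real.exp (-(τ / n) * ∑ k ∈ Finset.range n, q (t - τ + ↑k * τ / n)) ≤ 1 :=
        Real.exp_le_one_iff.mpr (by nlinarith [hc0.le])
      have p1 := Real.exp_pos (-(∫ y in (t - τ)..t, q y))
      have p2 := Real.exp_pos (-(τ / n) * ∑ k ∈ Finset.range n, q (t - τ + ↑k * τ / n))
      rw [hφ, abs_le]
      constructor <;> simp only [] <;> linarith
    exact opNorm_eq_essSup_abs τ hτ0 hτlt φ hφm 2 hφb (W - (S.comp E) ^ n) hDf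
  · subst hτeq
    have hzero : W - (S.comp E) ^ n = 0 := by
      ext f
      have hone : ∀ᵐ t ∂mu01, t ≠ (1:ℝ) := by
        rw [ae_iff]
        have hset : {t : ℝ | ¬ t ≠ 1} = {(1:ℝ)} := by ext x; simp
        rw [hset, mu01, Measure.restrict_apply (measurableSet_singleton 1)]
        exact measure_mono_null Set.inter_subset_left Real.volume_singleton
      filter_upwards [hDf f, hone, Lp.coeFn_zero ℝ 2 mu01] with t h1 h2 h3
      rw [ContinuousLinearMap.zero_apply, h3, h1,
        Set.indicator_of_notMem (fun hm => h2 (le_antisymm hm.2 hm.1))]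
      simp
    rw [hzero, norm_zero]
    have hres0 : (volume : Measure ℝ).restrict (Set.Icc (1:ℝ) 1) = 0 := by
      rw [Measure.restrict_eq_zero]
      simp [Set.Icc_self]
    rw [hres0, essSup_zero_real]
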